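/- The ratios of diameter numbers to side numbers converge to √2: for the side and diameter number sequences, the sequence of real numbers d(n)/a(n) tends to √2 as n → ∞. -/

import Mathlib

/-- The pair (side number, diameter number) at stage `n`:
`(a 0, d 0) = (1, 1)`, `a (n+1) = a n + d n`, `d (n+1) = 2 * a n + d n`. -/
def sideDiam : ℕ → ℕ × ℕ
  | 0 => (1, 1)
  | n + 1 => ((sideDiam n).1 + (sideDiam n).2, 2 * (sideDiam n).1 + (sideDiam n).2)

/-- The side numbers: `a 0 = 1`, `a (n+1) = a n + d n`. -/
def sideNum (n : ℕ) : ℕ := (sideDiam n).1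

/-- The diameter numbers: `d 0 = 1`, `d (n+1) = 2 * a n + d n`. -/
def diamNum (n : ℕ) : ℕ := (sideDiam n).2

open Filter Real

lemma diam_pos (n : ℕ) : 1 ≤ diamNum n := by
  induction n with
  | zero => simp [diamNum, sideDiam]
  | succ n ih => simp only [diamNum, sideDiam] at *; omega

lemma side_ge (n : ℕ) : n + 1 ≤ sideNum n := by
  induction n with
  | zero => simp [sideNum, sideDiam]
  | succ n ih =>
    have := diam_pos n
    simp only [sideNum, diamNum, sideDiam] at *; omega

lemma key (n : ℕ) : ((diamNum n : ℤ))^2 + (-1)^n = 2 * (sideNum n)^2 := by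
  induction n with
  | zero => simp [diamNum, sideNum, sideDiam]
  | succ n ih =>
    simp only [diamNum, sideNum, sideDiam, pow_succ] at *
    push_cast
    ring_nf
    ring_nf at ih
    linarith

theorem diam_div_side_tendsto_sqrt_two :
    Filter.Tendsto (fun n : ℕ => (diamNum n : ℝ) / (sideNum n : ℝ))
      Filter.atTop (nhds (Real.sqrt 2)) := by
  have hbd : ∀ n : ℕ, |(diamNum n : ℝ) / (sideNum n : ℝ) - Real.sqrt 2| ≤ 1 / (n + 1) := by
    intro n
    have ha : (n + 1 : ℝ) ≤ (sideNum n : ℝ) := by exact_mod_cast side_ge n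
    have han : (0:ℝ) < n + 1 := by positivity
    have hapos : (0:ℝ) < (sideNum n : ℝ) := lt_of_lt_of_le han ha
    set x : ℝ := (diamNum n : ℝ) / (sideNum n : ℝ) with hx
    have hx0 : 0 ≤ x := by positivity
    have hs2 : (0:ℝ) < Real.sqrt 2 := Real.sqrt_pos.mpr (by norm_num)
    have hs2' : (1:ℝ) ≤ Real.sqrt 2 := by
      rw [show (1:ℝ) = Real.sqrt 1 by simp]
      exact Real.sqrt_le_sqrt (by norm_num)
    have hsum : (0:ℝ) < x + Real.sqrt 2 := by linarith
    have hsq : Real.sqrt 2 ^ 2 = 2 := Real.sq_sqrt (by norm_num)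
    have hkey : ((diamNum n : ℝ))^2 = 2 * (sideNum n : ℝ)^2 - (-1)^n := by
      have := key n
      have : ((diamNum n : ℝ))^2 + (-1)^n = 2 * (sideNum n : ℝ)^2 := by exact_mod_cast this
      linarith
    have hxsq : |x^2 - 2| = 1 / (sideNum n : ℝ)^2 := by
      have : x^2 - 2 = -(-1:ℝ)^n / (sideNum n : ℝ)^2 := by
        field_simp [hx]
        rw [hx]; field_simp; linarith [hkey]
      rw [this, abs_div]
      congr 1
      · rcases Nat.even_or_odd n with h | h <;> simp [h.neg_one_pow]
      · exact abs_of_pos (by positivity)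
    have hfac : |x - Real.sqrt 2| * (x + Real.sqrt 2) = |x^2 - 2| := by
      rw [← abs_of_pos hsum, ← abs_mul]
      congr 1
      ring_nf
      rw [hsq]
      ring
    have h1 : |x - Real.sqrt 2| ≤ 1 / (sideNum n : ℝ)^2 := by
      have : |x - Real.sqrt 2| * 1 ≤ |x - Real.sqrt 2| * (x + Real.sqrt 2) := by
        apply mul_le_mul_of_nonneg_left (by linarith) (abs_nonneg _)
      rw [hfac, hxsq] at this
      linarith
    have h2 : 1 / (sideNum n : ℝ)^2 ≤ 1 / (n + 1) := by
      apply div_le_div_of_nonneg_left (by norm_num) han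
      calc (n + 1 : ℝ) ≤ (sideNum n : ℝ) := ha
        _ ≤ (sideNum n : ℝ)^2 := by nlinarith
    linarith
  rw [← tendsto_sub_nhds_zero_iff]
  apply squeeze_zero_norm hbd
  exact tendsto_one_div_add_atTop_nhds_zero_nat
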